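/- Let X be a connected, locally finite simple graph with vertex set V and graph distance d, and suppose there exist real constants α ≥ 1, β ≥ 0, γ ≥ 0 and a map f : V → ℤ with (i) α⁻¹·d(u,v) − β ≤ |f(u) − f(v)| ≤ α·d(u,v) + β for all u, v ∈ V, and (ii) for every n ∈ ℤ there exists x ∈ V with |f(x) − n| ≤ γ. Then for every bi-infinite geodesic ℓ : ℤ → V and every vertex x ∈ V there exists i ∈ ℤ with d(x, ℓ(i)) ≤ α² + 2αβ. In particular, every vertex of X lies within distance α² + 2αβ of any bi-infinite geodesic. -/

import Mathlib

/-- Discrete intermediate value theorem with location: if steps of `h` are bounded by `s`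
and `h a ≤ t ≤ h (a+n)`, then some `k ∈ [a, a+n]` has `|h k - t| ≤ s`. -/
private lemma ivt_core (s : ℝ) (hs : 0 ≤ s) (h : ℤ → ℤ)
    (hstep : ∀ i : ℤ, |(h (i+1) : ℝ) - h i| ≤ s) (t a : ℤ) :
    ∀ n : ℕ, h a ≤ t → t ≤ h (a + n) →
      ∃ k : ℤ, a ≤ k ∧ k ≤ a + n ∧ |(h k : ℝ) - t| ≤ s := by
  intro n
  induction n with
  | zero =>
    intro h1 h2
    refine ⟨a, le_refl a, by simp, ?_⟩
    have hEq : h a = t := le_antisymm h1 (by simpa using h2)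
    simp [hEq, hs]
  | succ n ih =>
    intro h1 h2
    by_cases hc : t ≤ h (a + n)
    · obtain ⟨k, hk1, hk2, hk3⟩ := ih h1 hc
      exact ⟨k, hk1, by omega, hk3⟩
    · push_neg at hc
      refine ⟨a + n, by omega, by omega, ?_⟩
      have hst := hstep (a + n)
      have h2' : (t : ℝ) ≤ (h (a + n + 1) : ℝ) := by
        have : a + ((n : ℤ) + 1) = a + n + 1 := by ring
        have h2'' : t ≤ h (a + n + 1) := by
          rw [← this]; exact_mod_cast h2
        exact_mod_cast h2''
      have hc' : ((h (a + n) : ℝ)) < (t : ℝ) := by exact_mod_cast hc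
      have hub : (h (a + n + 1) : ℝ) - h (a + n) ≤ s :=
        le_trans (le_abs_self _) hst
      rw [abs_sub_comm, abs_of_nonneg (by linarith)]
      linarith

/-- A quasi-isometric embedding `ℤ → ℤ` cannot take only positive values. -/
private lemma no_pos (α β : ℝ) (hα : 1 ≤ α) (hβ : 0 ≤ β) (h : ℤ → ℤ)
    (hlow : ∀ i j : ℤ, |(i : ℝ) - j| ≤ α * (|(h i : ℝ) - h j| + β))
    (hup : ∀ i j : ℤ, |(h i : ℝ) - h j| ≤ α * |(i : ℝ) - j| + β)
    (hpos : ∀ i, 0 < h i) : False := by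
  have hα0 : (0 : ℝ) < α := by linarith
  set s : ℝ := α + β with hs_def
  have hs : 0 ≤ s := by positivity
  have hstep : ∀ i : ℤ, |(h (i+1) : ℝ) - h i| ≤ s := by
    intro i
    have := hup (i+1) i
    have h1 : |((i:ℝ)+1) - i| = 1 := by
      rw [show ((i:ℝ)+1) - i = 1 by ring, abs_one]
    push_cast at this
    rw [h1] at this
    linarith
  obtain ⟨D0, hD0⟩ := exists_int_ge (s + β + α^2*(2*s+β)/2 + 1)
  set D : ℤ := max D0 1 with hD_def
  have hD1 : (1 : ℤ) ≤ D := le_max_right _ _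
  have hD : s + β + α^2*(2*s+β)/2 + 1 ≤ (D : ℝ) :=
    le_trans hD0 (by exact_mod_cast le_max_left D0 1)
  set c : ℤ := h 0 + D with hc_def
  obtain ⟨N0, hN0⟩ := exists_int_ge (α * (β + D + |(h 0 : ℝ)|))
  set N : ℤ := max N0 1 with hN_def
  have hN1 : (1 : ℤ) ≤ N := le_max_right _ _
  have hN : α * (β + D + |(h 0 : ℝ)|) ≤ (N : ℝ) :=
    le_trans hN0 (by exact_mod_cast le_max_left N0 1)
  -- Both h N and h (-N) are at least c
  have hbig : ∀ m : ℤ, |(m : ℝ)| = (N : ℝ) → (c : ℝ) ≤ (h m : ℝ) := by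
    intro m hm
    have hl := hlow m 0
    rw [show ((0:ℤ):ℝ) = (0:ℝ) by norm_num, sub_zero, hm] at hl
    -- α*(β + D + |h 0|) ≤ N ≤ α*(|h m - h 0| + β)
    have key : (D : ℝ) + |(h 0 : ℝ)| ≤ |(h m : ℝ) - h 0| := by
      have h2 : α * (β + (D:ℝ) + |(h 0 : ℝ)|) ≤ α * (|(h m : ℝ) - h 0| + β) :=
        le_trans hN hl
      have := le_of_mul_le_mul_left h2 hα0
      linarith
    have hm1 : (1 : ℝ) ≤ (h m : ℝ) := by exact_mod_cast hpos m
    have h01 : (1 : ℝ) ≤ (h 0 : ℝ) := by exact_mod_cast hpos 0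
    have hD1' : (1 : ℝ) ≤ (D : ℝ) := by exact_mod_cast hD1
    have habs0 : (h 0 : ℝ) ≤ |(h 0 : ℝ)| := le_abs_self _
    -- rule out h m ≤ h 0
    rcases le_or_gt ((h m : ℝ)) ((h 0 : ℝ)) with hle | hlt
    · have : |(h m : ℝ) - h 0| = (h 0 : ℝ) - h m := by
        rw [abs_sub_comm, abs_of_nonneg (by linarith)]
      rw [this] at key
      linarith
    · have : |(h m : ℝ) - h 0| = (h m : ℝ) - h 0 := abs_of_nonneg (by linarith)
      rw [this] at key
      have : (c : ℝ) = (h 0 : ℝ) + D := by push_cast [hc_def]; ring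
      rw [this]
      linarith
  have hNnn : (0 : ℤ) ≤ N := by omega
  have hNtoNat : ((N.toNat : ℤ)) = N := Int.toNat_of_nonneg hNnn
  have hc0 : h 0 ≤ c := by omega
  -- find j ∈ [0, N] with |h j - c| ≤ s
  have hcN : c ≤ h N := by
    have := hbig N (by rw [abs_of_nonneg (by exact_mod_cast hNnn)])
    exact_mod_cast this
  obtain ⟨j, hj0, hjN, hjc⟩ := ivt_core s hs h hstep c 0 N.toNat
    (by simpa using hc0) (by rw [zero_add, hNtoNat]; exact hcN)
  rw [zero_add, hNtoNat] at hjN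
  -- find k ∈ [0, N] with |h (-k) - c| ≤ s
  have hstep' : ∀ i : ℤ, |((fun i => h (-i)) (i+1) : ℝ) - ((fun i => h (-i)) i : ℝ)| ≤ s := by
    intro i
    simp only
    have := hstep (-(i+1))
    rw [show -(i+1) + 1 = -i by ring] at this
    rw [abs_sub_comm]
    exact this
  have hcN' : c ≤ h (-N) := by
    have := hbig (-N) (by push_cast; rw [abs_neg, abs_of_nonneg (by exact_mod_cast hNnn)])
    exact_mod_cast this
  obtain ⟨k, hk0, hkN, hkc⟩ := ivt_core s hs (fun i => h (-i)) hstep' c 0 N.toNat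
    (by simpa using hc0) (by rw [zero_add, hNtoNat]; simpa using hcN')
  rw [zero_add, hNtoNat] at hkN
  -- combine: |h (-k) - h j| ≤ 2s, so |(-k) - j| ≤ α*(2s+β), i.e. j + k ≤ α*(2s+β)
  have h2s : |(h (-k) : ℝ) - h j| ≤ 2 * s := by
    have := abs_sub_le ((h (-k) : ℝ)) ((c : ℝ)) ((h j : ℝ))
    rw [abs_sub_comm ((c:ℝ)) ((h j : ℝ))] at this
    linarith
  have hlow1 := hlow (-k) j
  have hcast : |((-k : ℤ) : ℝ) - j| = (j : ℝ) + k := by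
    push_cast
    rw [abs_sub_comm, abs_of_nonneg]
    · ring
    · have : (0:ℝ) ≤ (j:ℝ) := by exact_mod_cast hj0
      have : (0:ℝ) ≤ (k:ℝ) := by exact_mod_cast hk0
      push_cast
      have hj' : (0:ℝ) ≤ (j:ℝ) := by exact_mod_cast hj0
      linarith
  rw [hcast] at hlow1
  have hjk_le : (j : ℝ) + k ≤ α * (2*s + β) := by
    have : α * (|(h (-k) : ℝ) - h j| + β) ≤ α * (2*s + β) := by
      apply mul_le_mul_of_nonneg_left _ hα0.le
      linarith
    linarith
  -- lower bounds on j and k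
  have hDs : (D : ℝ) - s - β ≥ α^2*(2*s+β)/2 + 1 := by linarith
  have hcR : (c : ℝ) = (h 0 : ℝ) + D := by push_cast [hc_def]; ring
  have hjlb : α^2*(2*s+β)/2 + 1 ≤ α * j := by
    have hu := hup j 0
    rw [show ((0:ℤ):ℝ) = (0:ℝ) by norm_num, sub_zero,
      abs_of_nonneg (by exact_mod_cast hj0 : (0:ℝ) ≤ (j:ℝ))] at hu
    have hjge : (h j : ℝ) ≥ c - s := by
      have := abs_le.mp hjc
      linarith [this.1]
    have : (h j : ℝ) - h 0 ≥ (D : ℝ) - s := by rw [hcR] at hjge; linarith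
    have habs : (h j : ℝ) - h 0 ≤ |(h j : ℝ) - h 0| := le_abs_self _
    linarith
  have hklb : α^2*(2*s+β)/2 + 1 ≤ α * k := by
    have hu := hup (-k) 0
    rw [show ((0:ℤ):ℝ) = (0:ℝ) by norm_num, sub_zero] at hu
    have hknn : (0:ℝ) ≤ (k:ℝ) := by exact_mod_cast hk0
    have habsk : |((-k : ℤ) : ℝ)| = (k : ℝ) := by
      push_cast; rw [abs_neg, abs_of_nonneg hknn]
    rw [habsk] at hu
    have hkge : (h (-k) : ℝ) ≥ c - s := by
      have := abs_le.mp hkc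
      linarith [this.1]
    have : (h (-k) : ℝ) - h 0 ≥ (D : ℝ) - s := by rw [hcR] at hkge; linarith
    have habs : (h (-k) : ℝ) - h 0 ≤ |(h (-k) : ℝ) - h 0| := le_abs_self _
    linarith
  -- contradiction
  have hmul : α * ((j : ℝ) + k) ≤ α * (α * (2*s + β)) :=
    mul_le_mul_of_nonneg_left hjk_le hα0.le
  nlinarith [hjlb, hklb, hmul]

/-- In a connected, locally finite simple graph quasi-isometric to ℤ,
every vertex lies within distance `α² + 2αβ` of any bi-infinite geodesic. -/
theorem vertex_close_to_biinfinite_geodesic {V : Type*} (X : SimpleGraph V)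
    (hconn : X.Connected) (hlf : ∀ v : V, (X.neighborSet v).Finite)
    (α β γ : ℝ) (hα : 1 ≤ α) (hβ : 0 ≤ β) (hγ : 0 ≤ γ) (f : V → ℤ)
    (hf1 : ∀ u v : V, α⁻¹ * (X.dist u v : ℝ) - β ≤ (|f u - f v| : ℝ) ∧
        (|f u - f v| : ℝ) ≤ α * (X.dist u v : ℝ) + β)
    (hf2 : ∀ n : ℤ, ∃ x : V, (|f x - n| : ℝ) ≤ γ)
    (ℓ : ℤ → V) (hgeo : ∀ i j : ℤ, (X.dist (ℓ i) (ℓ j) : ℤ) = |i - j|)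
    (x : V) : ∃ i : ℤ, (X.dist x (ℓ i) : ℝ) ≤ α ^ 2 + 2 * α * β := by
  have hα0 : (0 : ℝ) < α := by linarith
  set g : ℤ → ℤ := fun i => f (ℓ i) with hg_def
  set t : ℤ := f x with ht_def
  have hd : ∀ i j : ℤ, (X.dist (ℓ i) (ℓ j) : ℝ) = |(i : ℝ) - j| := by
    intro i j
    have := hgeo i j
    have h2 : ((X.dist (ℓ i) (ℓ j) : ℤ) : ℝ) = ((|i - j| : ℤ) : ℝ) := by exact_mod_cast this
    push_cast at h2
    exact_mod_cast h2
  have habs_cast : ∀ u v : V, ((|f u - f v| : ℤ) : ℝ) = |(f u : ℝ) - (f v : ℝ)| := by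
    intro u v; push_cast; ring_nf
  have hup : ∀ i j : ℤ, |(g i : ℝ) - g j| ≤ α * |(i : ℝ) - j| + β := by
    intro i j
    have := (hf1 (ℓ i) (ℓ j)).2
    rw [hd] at this
    exact this
  have hlow : ∀ i j : ℤ, |(i : ℝ) - j| ≤ α * (|(g i : ℝ) - g j| + β) := by
    intro i j
    have := (hf1 (ℓ i) (ℓ j)).1
    rw [hd] at this
    have h2 : α⁻¹ * |(i : ℝ) - j| ≤ |(g i : ℝ) - g j| + β := by linarith
    have h3 := mul_le_mul_of_nonneg_left h2 hα0.le
    rw [← mul_assoc, mul_inv_cancel₀ hα0.ne', one_mul] at h3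
    exact h3
  -- g must cross t
  have hcross : ∃ a b : ℤ, g a ≤ t ∧ t ≤ g b := by
    by_contra hcon
    push_neg at hcon
    by_cases hc1 : ∃ a : ℤ, g a ≤ t
    · obtain ⟨a, ha⟩ := hc1
      -- then ∀ b, g b < t, apply no_pos to t - g
      have hall : ∀ b : ℤ, g b < t := fun b => hcon a b ha
      refine no_pos α β hα hβ (fun i => t - g i) ?_ ?_ (fun i => by
        have := hall i; show (0:ℤ) < t - g i; omega)
      · intro i j
        have := hlow i j
        have hE : |((t - g i : ℤ) : ℝ) - ((t - g j : ℤ) : ℝ)| = |(g i : ℝ) - g j| := by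
          push_cast; rw [abs_sub_comm]; ring_nf
        rw [hE]; exact this
      · intro i j
        have := hup i j
        have hE : |((t - g i : ℤ) : ℝ) - ((t - g j : ℤ) : ℝ)| = |(g i : ℝ) - g j| := by
          push_cast; rw [abs_sub_comm]; ring_nf
        rw [hE]; exact this
    · push_neg at hc1
      -- ∀ a, t < g a, apply no_pos to g - t
      refine no_pos α β hα hβ (fun i => g i - t) ?_ ?_ (fun i => by
        have := hc1 i; show (0:ℤ) < g i - t; omega)
      · intro i j
        have := hlow i j
        have hE : |((g i - t : ℤ) : ℝ) - ((g j - t : ℤ) : ℝ)| = |(g i : ℝ) - g j| := by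
          push_cast; ring_nf
        rw [hE]; exact this
      · intro i j
        have := hup i j
        have hE : |((g i - t : ℤ) : ℝ) - ((g j - t : ℤ) : ℝ)| = |(g i : ℝ) - g j| := by
          push_cast; ring_nf
        rw [hE]; exact this
  obtain ⟨a, b, ha, hb⟩ := hcross
  -- discrete IVT
  have hs : (0 : ℝ) ≤ α + β := by linarith
  have hstep : ∀ i : ℤ, |(g (i+1) : ℝ) - g i| ≤ α + β := by
    intro i
    have := hup (i+1) i
    push_cast at this
    rw [show ((i:ℝ)+1) - i = 1 by ring, abs_one] at this
    linarith
  have hk : ∃ k : ℤ, |(g k : ℝ) - t| ≤ α + β := by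
    rcases le_or_gt a b with hab | hab
    · obtain ⟨k, _, _, hk3⟩ := ivt_core (α + β) hs g hstep t a (b - a).toNat ha
        (by rw [Int.toNat_of_nonneg (by omega)]; simpa using hb)
      exact ⟨k, hk3⟩
    · -- reflected: h' i := g (a + b - i), h' b = g a ≤ t, h' a = g b ≥ t, b < a
      have hstep' : ∀ i : ℤ, |((fun i => g (a + b - i)) (i+1) : ℝ) -
          ((fun i => g (a + b - i)) i : ℝ)| ≤ α + β := by
        intro i
        simp only
        have := hstep (a + b - (i+1))
        rw [show a + b - (i+1) + 1 = a + b - i by ring] at this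
        rw [abs_sub_comm]
        exact this
      obtain ⟨k, _, _, hk3⟩ := ivt_core (α + β) hs (fun i => g (a + b - i)) hstep' t b
        (a - b).toNat (by simpa using ha)
        (by rw [Int.toNat_of_nonneg (by omega)]
            simp only [show b + (a - b) = a by ring]
            simpa using hb)
      exact ⟨a + b - k, hk3⟩
  obtain ⟨k, hk⟩ := hk
  refine ⟨k, ?_⟩
  have := (hf1 x (ℓ k)).1
  have hk' : |(f x : ℝ) - (f (ℓ k) : ℝ)| ≤ α + β := by
    rw [abs_sub_comm]; exact hk
  -- α⁻¹ * d - β ≤ α + β  ⇒  d ≤ α² + 2αβ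
  have h2 : α⁻¹ * (X.dist x (ℓ k) : ℝ) ≤ α + 2*β := by linarith [this, hk']
  have h3 := mul_le_mul_of_nonneg_left h2 hα0.le
  rw [← mul_assoc, mul_inv_cancel₀ hα0.ne', one_mul] at h3
  nlinarith
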